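/- For every integer n ≥ 2, one has s_n/(ε·s_{n−1}) < exp(−1/(2n) − (S − 1/72)/n² + 0.67/n³). -/

import Mathlib

open Real Filter

/-- `S = 13591409/545140134` from the Chudnovsky series. -/
noncomputable def S : ℝ := 13591409 / 545140134

/-- `ε = 1728/640320³ = 53360⁻³`. -/
noncomputable def eps : ℝ := 1728 / 640320 ^ 3

/-- The terms `s_k = (6k)!/((3k)!·(k!)³) · (k+S)/640320^{3k}` of the Chudnovsky series. -/
noncomputable def s (k : ℕ) : ℝ :=
  (Nat.factorial (6 * k) : ℝ) / ((Nat.factorial (3 * k) : ℝ) * (Nat.factorial k : ℝ) ^ 3)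
    * ((k : ℝ) + S) / 640320 ^ (3 * k)

lemma pade_aux (y : ℝ) (hy : 0 ≤ y) : 2 - y ≤ (2 + y) * Real.exp (-y) := by
  have hder : ∀ t : ℝ, HasDerivAt (fun z : ℝ => (2 + z) * Real.exp (-z) + z)
      (1 * Real.exp (-t) + (2 + t) * (-Real.exp (-t)) + 1) t := by
    intro t
    have h1 : HasDerivAt (fun z : ℝ => Real.exp (-z)) (-Real.exp (-t)) t := by
      simpa [Function.comp_def] using (Real.hasDerivAt_exp (-t)).comp t (hasDerivAt_neg t)
    have h2 : HasDerivAt (fun z : ℝ => 2 + z) 1 t := by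
      simpa using (hasDerivAt_id t).const_add (2:ℝ)
    simpa [Pi.add_def, Pi.mul_def] using (h2.mul h1).add (hasDerivAt_id t)
  have hmono : MonotoneOn (fun z : ℝ => (2 + z) * Real.exp (-z) + z) (Set.Ici (0:ℝ)) := by
    apply monotoneOn_of_deriv_nonneg (convex_Ici 0)
    · exact fun t _ => ((hder t).continuousAt).continuousWithinAt
    · exact fun t _ => ((hder t).differentiableAt).differentiableWithinAt
    · intro t _
      rw [(hder t).deriv]
      have h3 : (1 + t) * Real.exp (-t) ≤ 1 := by
        have h4 := Real.add_one_le_exp t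
        have h5 : (1 + t) * Real.exp (-t) ≤ Real.exp t * Real.exp (-t) := by
          apply mul_le_mul_of_nonneg_right (by linarith) (Real.exp_pos _).le
        rwa [← Real.exp_add, add_neg_cancel, Real.exp_zero] at h5
      nlinarith [Real.exp_pos (-t)]
  have := hmono (Set.self_mem_Ici) (Set.mem_Ici.mpr hy) hy
  simp only [add_zero, neg_zero, Real.exp_zero, mul_one] at this
  linarith

lemma pade (x : ℝ) (hx : x ≤ 0) : (2 + x) / (2 - x) ≤ Real.exp x := by
  have h2 : (0:ℝ) < 2 - x := by linarith
  rw [div_le_iff₀ h2]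
  have h3 := pade_aux (-x) (by linarith)
  simp only [neg_neg] at h3
  nlinarith [h3]

lemma fact6 (a : ℕ) : (a+6).factorial = (a+6)*(a+5)*(a+4)*(a+3)*(a+2)*(a+1)*a.factorial := by
  rw [show a+6 = (a+5)+1 by omega, Nat.factorial_succ, show a+5 = (a+4)+1 by omega,
    Nat.factorial_succ, show a+4 = (a+3)+1 by omega, Nat.factorial_succ,
    show a+3 = (a+2)+1 by omega, Nat.factorial_succ, show a+2 = (a+1)+1 by omega,
    Nat.factorial_succ, Nat.factorial_succ]
  ring

lemma fact3 (a : ℕ) : (a+3).factorial = (a+3)*(a+2)*(a+1)*a.factorial := by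
  rw [show a+3 = (a+2)+1 by omega, Nat.factorial_succ, show a+2 = (a+1)+1 by omega,
    Nat.factorial_succ, Nat.factorial_succ]
  ring

lemma hS_pos : (0:ℝ) < S := by norm_num [S]

lemma kS_pos (k : ℕ) : (0:ℝ) < (k:ℝ) + S := by
  have := hS_pos
  positivity

lemma s_pos (k : ℕ) : 0 < s k := by
  unfold s
  have h1 := kS_pos k
  have h2 : (0:ℝ) < (Nat.factorial (6*k) : ℝ) := by positivity
  have h3 : (0:ℝ) < (Nat.factorial (3*k) : ℝ) := by positivity
  have h4 : (0:ℝ) < (Nat.factorial k : ℝ) := by positivity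
  positivity

lemma ratio_val (k : ℕ) :
    s (k+1) / (eps * s k) =
      ((6*(k:ℝ)+1)*(6*(k:ℝ)+3)*(6*(k:ℝ)+5)*((k:ℝ)+1+S)) / (216*((k:ℝ)+1)^3*((k:ℝ)+S)) := by
  have hkS : ((k:ℝ) + S) ≠ 0 := (kS_pos k).ne'
  have hf3 : ((Nat.factorial (3*k) : ℝ)) ≠ 0 := by positivity
  have hf1 : ((Nat.factorial k : ℝ)) ≠ 0 := by positivity
  have hp : ((640320:ℝ) ^ (3*k)) ≠ 0 := by positivity
  have hk1 : ((k:ℝ) + 1) ≠ 0 := by positivity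
  have hs : s (k+1) = eps * s k *
      (((6*(k:ℝ)+1)*(6*(k:ℝ)+3)*(6*(k:ℝ)+5)*((k:ℝ)+1+S)) / (216*((k:ℝ)+1)^3*((k:ℝ)+S))) := by
    unfold s eps
    rw [show 6*(k+1) = 6*k+6 by ring, show 3*(k+1) = 3*k+3 by ring,
      fact6 (6*k), fact3 (3*k), Nat.factorial_succ k, pow_add]
    push_cast
    field_simp
    ring
  have h0 : eps * s k ≠ 0 := by
    have : (0:ℝ) < eps := by norm_num [eps]
    exact (mul_pos this (s_pos k)).ne'
  rw [hs, mul_div_cancel_left₀ _ h0]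

theorem ratio_exp_upper_bound (n : ℕ) (hn : 2 ≤ n) :
    s n / (eps * s (n - 1)) <
      Real.exp (-1 / (2 * (n : ℝ)) - (S - 1 / 72) / (n : ℝ) ^ 2 + 0.67 / (n : ℝ) ^ 3) := by
  obtain ⟨k, rfl⟩ : ∃ k, n = k + 1 := ⟨n - 1, by omega⟩
  have hk1 : 1 ≤ k := by omega
  have hK : (1:ℝ) ≤ (k:ℝ) := by exact_mod_cast hk1
  simp only [Nat.add_sub_cancel]
  rw [ratio_val k]
  push_cast
  set K : ℝ := (k:ℝ) with hKdef
  have hSval : S = 13591409 / 545140134 := rfl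
  have hc : (0:ℝ) < S - 1/72 := by rw [hSval]; norm_num
  -- abbreviate u, the numerator of the exponent over (K+1)^3
  set u : ℝ := -(K+1)^2/2 - (S - 1/72)*(K+1) + 67/100 with hudef
  have hm3 : (0:ℝ) < (K+1)^3 := by positivity
  have hxeq : -1 / (2 * (K+1)) - (S - 1/72) / (K+1)^2 + 0.67 / (K+1)^3 = u / (K+1)^3 := by
    rw [hudef, show (0.67:ℝ) = 67/100 by norm_num]
    have h1 : (K+1) ≠ 0 := by positivity
    field_simp
  rw [hxeq]
  have hu_neg : u < 0 := by
    rw [hudef]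
    nlinarith [mul_pos hc (show (0:ℝ) < K + 1 by linarith)]
  have hx_le : u / (K+1)^3 ≤ 0 :=
    (div_neg_of_neg_of_pos hu_neg hm3).le
  have hQden : (0:ℝ) < 2*(K+1)^3 - u := by nlinarith
  have hRden : (0:ℝ) < 216*(K+1)^3*(K+S) := by
    have := hS_pos
    positivity
  have hqeq : (2 + u/(K+1)^3) / (2 - u/(K+1)^3) = (2*(K+1)^3 + u) / (2*(K+1)^3 - u) := by
    have h1 : (0:ℝ) < 2 - u/(K+1)^3 := by
      have : u/(K+1)^3 < 0 := div_neg_of_neg_of_pos hu_neg hm3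
      linarith
    rw [div_eq_div_iff h1.ne' hQden.ne']
    have h2 : ((K:ℝ)+1)^3 ≠ 0 := hm3.ne'
    field_simp
  have hkey : (6*K+1)*(6*K+3)*(6*K+5)*(K+1+S) / (216*(K+1)^3*(K+S)) <
      (2*(K+1)^3 + u) / (2*(K+1)^3 - u) := by
    rw [div_lt_div_iff₀ hRden hQden, hudef, hSval]
    nlinarith [hK, sq_nonneg (K-1), pow_nonneg (show (0:ℝ) ≤ K-1 by linarith) 3,
      pow_nonneg (show (0:ℝ) ≤ K-1 by linarith) 4]
  calc (6*K+1)*(6*K+3)*(6*K+5)*(K+1+S) / (216*(K+1)^3*(K+S))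
      < (2*(K+1)^3 + u) / (2*(K+1)^3 - u) := hkey
    _ = (2 + u/(K+1)^3) / (2 - u/(K+1)^3) := hqeq.symm
    _ ≤ Real.exp (u/(K+1)^3) := pade _ hx_le
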